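/- Let w : ℝⁿ → ℝ be a bounded C² function whose graph is a minimal hypersurface (i.e. div(dw/(1+|dw|²)^{1/2}) = 0). Then for every r > 0 the area of the graph of w over the ball B_r satisfies ∫_{B_r} (1+|dw|²)^{1/2} dx ≤ C rⁿ (1 + r^{-1} ‖w‖_∞) for a constant C = C(n). -/

import Mathlib

open MeasureTheory

open MeasureTheory Metric Set

noncomputable def cutoff (n : ℕ) (c : ℝ) (x : EuclideanSpace ℝ (Fin n)) : ℝ :=
  Real.smoothTransition (c - ‖x‖)

lemma cutoff_nonneg (n : ℕ) (c : ℝ) (x : EuclideanSpace ℝ (Fin n)) : 0 ≤ cutoff n c x :=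
  Real.smoothTransition.nonneg _

lemma cutoff_le_one (n : ℕ) (c : ℝ) (x : EuclideanSpace ℝ (Fin n)) : cutoff n c x ≤ 1 :=
  Real.smoothTransition.le_one _

lemma cutoff_eq_one {n : ℕ} {c : ℝ} {x : EuclideanSpace ℝ (Fin n)} (h : ‖x‖ ≤ c - 1) :
    cutoff n c x = 1 :=
  Real.smoothTransition.one_of_one_le (by linarith)

lemma cutoff_eq_zero {n : ℕ} {c : ℝ} {x : EuclideanSpace ℝ (Fin n)} (h : c ≤ ‖x‖) :
    cutoff n c x = 0 :=
  Real.smoothTransition.zero_of_nonpos (by linarith)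

lemma cutoff_contDiff (n : ℕ) {c : ℝ} (hc : 1 < c) : ContDiff ℝ 1 (cutoff n c) := by
  rw [contDiff_iff_contDiffAt]
  intro x
  rcases eq_or_ne x 0 with rfl | hx
  · apply ContDiffAt.congr_of_eventuallyEq (contDiffAt_const (c := (1:ℝ)))
    filter_upwards [Metric.ball_mem_nhds (0 : EuclideanSpace ℝ (Fin n))
      (by linarith : (0:ℝ) < c - 1)] with y hy
    exact cutoff_eq_one (by rw [mem_ball, dist_eq_norm, sub_zero] at hy; linarith)
  · exact Real.smoothTransition.contDiffAt.comp x (contDiffAt_const.sub (contDiffAt_norm ℝ hx))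

lemma cutoff_hasCompactSupport (n : ℕ) (c : ℝ) : HasCompactSupport (cutoff n c) :=
  HasCompactSupport.intro (isCompact_closedBall (0 : EuclideanSpace ℝ (Fin n)) c)
    (fun x hx => cutoff_eq_zero
      (by rw [mem_closedBall, dist_eq_norm, sub_zero, not_le] at hx; linarith))


/-- The `i`-th partial derivative of `f : ℝⁿ → ℝ`. -/
noncomputable def partialDeriv' (n : ℕ) (f : EuclideanSpace ℝ (Fin n) → ℝ) (i : Fin n)
    (x : EuclideanSpace ℝ (Fin n)) : ℝ :=
  fderiv ℝ f x (EuclideanSpace.single i 1)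

/-- The squared length `|df|²` of the gradient of `f : ℝⁿ → ℝ`. -/
noncomputable def gradSq (n : ℕ) (f : EuclideanSpace ℝ (Fin n) → ℝ)
    (x : EuclideanSpace ℝ (Fin n)) : ℝ :=
  ∑ i, (partialDeriv' n f i x) ^ 2

/-- `div(df/√(1+|df|²))`, the negative of the mean curvature of the graph of `f`. -/
noncomputable def minimalOp (n : ℕ) (f : EuclideanSpace ℝ (Fin n) → ℝ)
    (x : EuclideanSpace ℝ (Fin n)) : ℝ :=
  ∑ i, partialDeriv' n (fun y => partialDeriv' n f i y / Real.sqrt (1 + gradSq n f y)) i x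

set_option maxHeartbeats 1000000 in
/-- Area bound for bounded entire minimal graphs: there is `C = C(n)` so that if
`w : ℝⁿ → ℝ` is C², `|w| ≤ M`, and the graph of `w` is minimal, then for all `r > 0`,
`∫_{B_r} √(1+|dw|²) ≤ C rⁿ (1 + r⁻¹ M)`. -/
theorem minimal_graph_area_bound (n : ℕ) :
    ∃ C : ℝ, 0 < C ∧ ∀ (w : EuclideanSpace ℝ (Fin n) → ℝ) (M : ℝ),
      ContDiff ℝ 2 w → (∀ x, |w x| ≤ M) → (∀ x, minimalOp n w x = 0) →
      ∀ r : ℝ, 0 < r →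
        (∫ x in Metric.ball (0 : EuclideanSpace ℝ (Fin n)) r,
            Real.sqrt (1 + gradSq n w x)) ≤ C * r ^ n * (1 + r⁻¹ * M) := by
  classical
  obtain ⟨K, hK⟩ := ((cutoff_hasCompactSupport n 2).fderiv ℝ).exists_bound_of_continuous
    ((cutoff_contDiff n (by norm_num)).continuous_fderiv one_ne_zero)
  set K₀ : ℝ := max K 1 with hK₀def
  have hK₀1 : (1:ℝ) ≤ K₀ := le_max_right _ _
  have hK₀ : ∀ y, ‖fderiv ℝ (cutoff n 2) y‖ ≤ K₀ := fun y => (hK y).trans (le_max_left _ _)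
  set V₁ : ℝ := (volume (closedBall (0 : EuclideanSpace ℝ (Fin n)) 1)).toReal with hV₁def
  have hV₁pos : 0 < V₁ :=
    ENNReal.toReal_pos (measure_closedBall_pos _ _ one_pos).ne' measure_closedBall_lt_top.ne
  refine ⟨2 ^ n * V₁ * (1 + 2 * n * K₀), by positivity, ?_⟩
  intro w M hw hM hMin r hr
  have hrinv : (0:ℝ) < r⁻¹ := inv_pos.mpr hr
  have hM0 : (0:ℝ) ≤ M := (abs_nonneg (w 0)).trans (hM 0)
  -- the scaling map and the cutoffs
  set L : EuclideanSpace ℝ (Fin n) →L[ℝ] EuclideanSpace ℝ (Fin n) :=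
    r⁻¹ • ContinuousLinearMap.id ℝ (EuclideanSpace ℝ (Fin n)) with hLdef
  have hLx : ∀ x, L x = r⁻¹ • x := fun x => rfl
  have hLnorm : ∀ x, ‖L x‖ = r⁻¹ * ‖x‖ := by
    intro x; rw [hLx, norm_smul, Real.norm_eq_abs, abs_of_pos hrinv]
  set φ : EuclideanSpace ℝ (Fin n) → ℝ := fun x => cutoff n 2 (L x) with hφdef
  set ψ : EuclideanSpace ℝ (Fin n) → ℝ := fun x => cutoff n 4 (L x) with hψdef
  set e : Fin n → EuclideanSpace ℝ (Fin n) := fun i => EuclideanSpace.single i 1 with hedef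
  have hφ1 : ∀ x, ‖x‖ ≤ r → φ x = 1 := by
    intro x hx
    apply cutoff_eq_one
    rw [hLnorm]
    rw [inv_mul_le_iff₀ hr]  -- r⁻¹ * ‖x‖ ≤ 2 - 1
    norm_num
    linarith
  have hφ0 : ∀ x, 2 * r ≤ ‖x‖ → φ x = 0 := by
    intro x hx
    apply cutoff_eq_zero
    rw [hLnorm, le_inv_mul_iff₀ hr]
    linarith
  have hψ1 : ∀ x, ‖x‖ ≤ 3 * r → ψ x = 1 := by
    intro x hx
    apply cutoff_eq_one
    rw [hLnorm, inv_mul_le_iff₀ hr]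
    norm_num
    linarith
  have hψ0 : ∀ x, 4 * r ≤ ‖x‖ → ψ x = 0 := by
    intro x hx
    apply cutoff_eq_zero
    rw [hLnorm, le_inv_mul_iff₀ hr]
    linarith
  have hφnn : ∀ x, 0 ≤ φ x := fun x => cutoff_nonneg _ _ _
  have hφle1 : ∀ x, φ x ≤ 1 := fun x => cutoff_le_one _ _ _
  have hψnn : ∀ x, 0 ≤ ψ x := fun x => cutoff_nonneg _ _ _
  have hψle1 : ∀ x, ψ x ≤ 1 := fun x => cutoff_le_one _ _ _
  have hφC : ContDiff ℝ 1 φ := (cutoff_contDiff n (by norm_num)).comp L.contDiff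
  have hψC : ContDiff ℝ 1 ψ := (cutoff_contDiff n (by norm_num)).comp L.contDiff
  -- basic facts about the gradient terms
  have hq0 : ∀ x, 0 ≤ gradSq n w x := fun x => Finset.sum_nonneg fun i _ => sq_nonneg _
  set s : EuclideanSpace ℝ (Fin n) → ℝ := fun x => Real.sqrt (1 + gradSq n w x) with hsdef
  have hs1 : ∀ x, 1 ≤ s x := by
    intro x
    rw [hsdef]
    rw [show (1:ℝ) = Real.sqrt 1 by simp]
    exact Real.sqrt_le_sqrt (by simp; linarith [hq0 x])
  have hs0 : ∀ x, 0 < s x := fun x => lt_of_lt_of_le one_pos (hs1 x)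
  have hss : ∀ x, s x * s x = 1 + gradSq n w x :=
    fun x => Real.mul_self_sqrt (by linarith [hq0 x])
  have hw1 : ContDiff ℝ 1 w := hw.of_le (by norm_num)
  have hpdC : ∀ i, ContDiff ℝ 1 (partialDeriv' n w i) := by
    intro i
    have hfd : ContDiff ℝ 1 (fderiv ℝ w) := hw.fderiv_right (by norm_num)
    exact hfd.clm_apply contDiff_const
  have hqC : ContDiff ℝ 1 (gradSq n w) := ContDiff.sum fun i _ => (hpdC i).pow 2
  have hsC : ContDiff ℝ 1 s := (contDiff_const.add hqC).sqrt fun x => by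
    have := hq0 x; positivity
  set X : Fin n → EuclideanSpace ℝ (Fin n) → ℝ :=
    fun i x => ψ x * (partialDeriv' n w i x / s x) with hXdef
  have hXC : ∀ i, ContDiff ℝ 1 (X i) :=
    fun i => hψC.mul ((hpdC i).div hsC fun x => (hs0 x).ne')
  set g : EuclideanSpace ℝ (Fin n) → ℝ := fun x => w x * (φ x * φ x) with hgdef
  have hgC : ContDiff ℝ 1 g := hw1.mul (hφC.mul hφC)
  have hgsupp : HasCompactSupport g := by
    apply HasCompactSupport.intro (isCompact_closedBall (0 : EuclideanSpace ℝ (Fin n)) (2*r))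
    intro x hx
    rw [mem_closedBall, dist_eq_norm, sub_zero, not_le] at hx
    rw [hgdef]
    simp [hφ0 x hx.le]
  have hXsupp : ∀ i, HasCompactSupport (X i) := by
    intro i
    apply HasCompactSupport.intro (isCompact_closedBall (0 : EuclideanSpace ℝ (Fin n)) (4*r))
    intro x hx
    rw [mem_closedBall, dist_eq_norm, sub_zero, not_le] at hx
    rw [hXdef]
    simp [hψ0 x hx.le]
  -- integrability helper
  have key_int : ∀ (h : EuclideanSpace ℝ (Fin n) → ℝ), Continuous h →
      (∀ x, 4 * r < ‖x‖ → h x = 0) → Integrable h := by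
    intro h hc h0
    apply hc.integrable_of_hasCompactSupport
    apply HasCompactSupport.intro (isCompact_closedBall (0 : EuclideanSpace ℝ (Fin n)) (4*r))
    intro x hx
    rw [mem_closedBall, dist_eq_norm, sub_zero, not_le] at hx
    exact h0 x hx
  -- |X i x| ≤ 1
  have hXle1 : ∀ i x, |X i x| ≤ 1 := by
    intro i x
    rw [hXdef, abs_mul, abs_div]
    have h1 : |ψ x| ≤ 1 := abs_le.2 ⟨by linarith [hψnn x], hψle1 x⟩
    have h2 : |partialDeriv' n w i x| ≤ s x := by
      rw [← Real.sqrt_sq_eq_abs, hsdef]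
      apply Real.sqrt_le_sqrt
      have : (partialDeriv' n w i x) ^ 2 ≤ gradSq n w x :=
        Finset.single_le_sum (f := fun j => (partialDeriv' n w j x) ^ 2)
          (fun j _ => sq_nonneg _) (Finset.mem_univ i)
      linarith
    have h3 : |partialDeriv' n w i x| / |s x| ≤ 1 := by
      rw [abs_of_pos (hs0 x)]
      exact div_le_one_of_le₀ h2 (hs0 x).le
    calc |ψ x| * (|partialDeriv' n w i x| / |s x|) ≤ 1 * 1 :=
      mul_le_mul h1 h3 (by positivity) zero_le_one
    _ = 1 := one_mul 1
  -- bound on the derivative of φ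
  have hφ' : ∀ i x, |fderiv ℝ φ x (e i)| ≤ K₀ * r⁻¹ := by
    intro i x
    have hd : fderiv ℝ φ x = (fderiv ℝ (cutoff n 2) (L x)).comp L := by
      rw [hφdef]
      rw [show (fun x => cutoff n 2 (L x)) = (cutoff n 2) ∘ L from rfl]
      rw [fderiv_comp x (((cutoff_contDiff n (by norm_num)).differentiable one_ne_zero) (L x))
        L.differentiableAt, L.fderiv]
    rw [hd]
    calc |((fderiv ℝ (cutoff n 2) (L x)).comp L) (e i)|
        = ‖(fderiv ℝ (cutoff n 2) (L x)) (L (e i))‖ := rfl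
      _ ≤ ‖fderiv ℝ (cutoff n 2) (L x)‖ * ‖L (e i)‖ :=
          (fderiv ℝ (cutoff n 2) (L x)).le_opNorm _
      _ ≤ K₀ * (r⁻¹ * ‖e i‖) := by
          apply mul_le_mul (hK₀ _) (le_of_eq (hLnorm _)) (norm_nonneg _)
          linarith
      _ = K₀ * r⁻¹ := by rw [hedef]; simp [EuclideanSpace.norm_single]
  -- product rule for φ * φ and bound
  have hφφd : ∀ x, DifferentiableAt ℝ (fun y => φ y * φ y) x :=
    fun x => ((hφC.mul hφC).differentiable one_ne_zero) x
  have hφφ' : ∀ i x, |fderiv ℝ (fun y => φ y * φ y) x (e i)| ≤ 2 * (K₀ * r⁻¹) := by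
    intro i x
    have h1 : fderiv ℝ (fun y => φ y * φ y) x =
        φ x • fderiv ℝ φ x + φ x • fderiv ℝ φ x :=
      fderiv_mul (hφC.differentiable one_ne_zero x) (hφC.differentiable one_ne_zero x)
    rw [h1]
    simp only [ContinuousLinearMap.add_apply, ContinuousLinearMap.smul_apply, smul_eq_mul]
    have := hφ' i x
    have h2 : |φ x * fderiv ℝ φ x (e i)| ≤ K₀ * r⁻¹ := by
      rw [abs_mul]
      calc |φ x| * |fderiv ℝ φ x (e i)| ≤ 1 * (K₀ * r⁻¹) := by
            apply mul_le_mul (abs_le.2 ⟨by linarith [hφnn x], hφle1 x⟩) this (abs_nonneg _)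
              zero_le_one
        _ = K₀ * r⁻¹ := one_mul _
    calc |φ x * fderiv ℝ φ x (e i) + φ x * fderiv ℝ φ x (e i)|
        ≤ |φ x * fderiv ℝ φ x (e i)| + |φ x * fderiv ℝ φ x (e i)| := abs_add_le _ _
      _ ≤ 2 * (K₀ * r⁻¹) := by linarith
  -- fderiv (φφ) vanishes for ‖x‖ > 2r
  have hφφ'0 : ∀ x, 2 * r < ‖x‖ → fderiv ℝ (fun y => φ y * φ y) x = 0 := by
    intro x hx
    have hU : IsOpen {y : EuclideanSpace ℝ (Fin n) | 2 * r < ‖y‖} :=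
      isOpen_lt continuous_const continuous_norm
    have hev : (fun y => φ y * φ y) =ᶠ[nhds x] (fun _ => (0:ℝ)) := by
      filter_upwards [hU.mem_nhds hx] with y hy
      simp [hφ0 y (le_of_lt hy)]
    rw [hev.fderiv_eq, fderiv_fun_const]
    rfl
  -- integration by parts for each i
  obtain ⟨D, hD⟩ := hgC.lipschitzWith_of_hasCompactSupport hgsupp one_ne_zero
  have ibp : ∀ i, ∫ x, fderiv ℝ (X i) x (e i) * g x =
      - ∫ x, fderiv ℝ g x (e i) * X i x := by
    intro i
    obtain ⟨Ci, hCi⟩ := (hXC i).lipschitzWith_of_hasCompactSupport (hXsupp i) one_ne_zero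
    have h := LipschitzWith.integral_lineDeriv_mul_eq (μ := volume) hCi hD hgsupp (e i)
    have hl1 : ∀ x, lineDeriv ℝ (X i) x (e i) = fderiv ℝ (X i) x (e i) :=
      fun x => (((hXC i).differentiable one_ne_zero) x).lineDeriv_eq_fderiv
    have hl2 : ∀ x, lineDeriv ℝ g x (-(e i)) = -(fderiv ℝ g x (e i)) := by
      intro x
      rw [((hgC.differentiable one_ne_zero) x).lineDeriv_eq_fderiv, map_neg]
    simp_rw [hl1, hl2, neg_mul] at h
    rw [h, integral_neg]
  -- continuity of fderiv-applied maps
  have hfdXc : ∀ i, Continuous fun x => fderiv ℝ (X i) x (e i) :=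
    fun i => ((hXC i).continuous_fderiv one_ne_zero).clm_apply continuous_const
  have hfdgc : ∀ i, Continuous fun x => fderiv ℝ g x (e i) :=
    fun i => (hgC.continuous_fderiv one_ne_zero).clm_apply continuous_const
  have hφφfc : ∀ i, Continuous fun x => fderiv ℝ (fun y => φ y * φ y) x (e i) :=
    fun i => ((hφC.mul hφC).continuous_fderiv one_ne_zero).clm_apply continuous_const
  -- the divergence term integrates to zero
  have sum_zero : ∑ i, ∫ x, fderiv ℝ (X i) x (e i) * g x = 0 := by
    rw [← integral_finset_sum]
    · have hz : ∀ x, ∑ i, fderiv ℝ (X i) x (e i) * g x = 0 := by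
        intro x
        rw [← Finset.sum_mul]
        rcases lt_or_ge ‖x‖ (3 * r) with hx | hx
        · have hfe : ∀ i, fderiv ℝ (X i) x =
              fderiv ℝ (fun y => partialDeriv' n w i y / Real.sqrt (1 + gradSq n w y)) x := by
            intro i
            apply Filter.EventuallyEq.fderiv_eq
            have hU : IsOpen {y : EuclideanSpace ℝ (Fin n) | ‖y‖ < 3 * r} :=
              isOpen_lt continuous_norm continuous_const
            filter_upwards [hU.mem_nhds hx] with y hy
            rw [hXdef]
            simp only [hψ1 y hy.le, one_mul, hsdef]
          have : ∑ i, fderiv ℝ (X i) x (e i) = minimalOp n w x := by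
            rw [minimalOp]
            apply Finset.sum_congr rfl
            intro i _
            rw [hfe i]
            rfl
          rw [this, hMin x, zero_mul]
        · have : g x = 0 := by rw [hgdef]; simp [hφ0 x (by linarith)]
          rw [this, mul_zero]
      simp_rw [hz]
      exact integral_zero _ _
    · intro i _
      apply key_int _ ((hfdXc i).mul hgC.continuous)
      intro x hx
      have : g x = 0 := by rw [hgdef]; simp [hφ0 x (by linarith)]
      rw [Pi.mul_apply, this, mul_zero]
  -- hence the sum of the other integrals vanishes
  have sum_zero' : ∑ i, ∫ x, fderiv ℝ g x (e i) * X i x = 0 := by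
    have h := sum_zero
    simp_rw [ibp] at h
    rw [Finset.sum_neg_distrib, neg_eq_zero] at h
    exact h
  -- product rule
  have prod_rule : ∀ i x, fderiv ℝ g x (e i) =
      partialDeriv' n w i x * (φ x * φ x) + w x * fderiv ℝ (fun y => φ y * φ y) x (e i) := by
    intro i x
    rw [hgdef]
    rw [fderiv_fun_mul (hw1.differentiable one_ne_zero x) (hφφd x)]
    simp only [ContinuousLinearMap.add_apply, ContinuousLinearMap.smul_apply, smul_eq_mul]
    rw [show fderiv ℝ w x (e i) = partialDeriv' n w i x from rfl]
    ring
  -- integrability of the two pieces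
  have intA : ∀ i, Integrable (fun x => (partialDeriv' n w i x * (φ x * φ x)) * X i x) := by
    intro i
    apply key_int _ (((hpdC i).continuous.mul (hφC.continuous.mul hφC.continuous)).mul
      (hXC i).continuous)
    intro x hx
    simp [hφ0 x (by linarith)]
  have intB : ∀ i, Integrable
      (fun x => (w x * fderiv ℝ (fun y => φ y * φ y) x (e i)) * X i x) := by
    intro i
    apply key_int _ ((hw1.continuous.mul (hφφfc i)).mul (hXC i).continuous)
    intro x hx
    simp only [Pi.mul_apply]
    rw [hφφ'0 x (by linarith)]
    simp
  have sum_split : ∀ i, ∫ x, fderiv ℝ g x (e i) * X i x =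
      (∫ x, (partialDeriv' n w i x * (φ x * φ x)) * X i x)
      + ∫ x, (w x * fderiv ℝ (fun y => φ y * φ y) x (e i)) * X i x := by
    intro i
    rw [← integral_add (intA i) (intB i)]
    congr 1
    funext x
    rw [prod_rule i x, add_mul]
  have keyA : ∑ i, ∫ x, (partialDeriv' n w i x * (φ x * φ x)) * X i x
      = ∫ x, (φ x * φ x) * (gradSq n w x / s x) := by
    rw [← integral_finset_sum _ (fun i _ => intA i)]
    congr 1
    funext x
    by_cases hx : φ x = 0
    · simp [hx]
    · have hx2 : ‖x‖ < 2 * r := by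
        by_contra h
        push_neg at h
        exact hx (hφ0 x h)
      have hψx : ψ x = 1 := hψ1 x (by linarith)
      simp only [hXdef, hψx, one_mul]
      rw [show gradSq n w x = ∑ i, (partialDeriv' n w i x) ^ 2 from rfl]
      rw [Finset.sum_div, Finset.mul_sum]
      apply Finset.sum_congr rfl
      intro i _
      have hsx := (hs0 x).ne'
      field_simp
  have keyB : ∫ x, (φ x * φ x) * (gradSq n w x / s x)
      = - ∑ i, ∫ x, (w x * fderiv ℝ (fun y => φ y * φ y) x (e i)) * X i x := by
    have h := sum_zero'
    rw [Finset.sum_congr rfl (fun i _ => sum_split i), Finset.sum_add_distrib, keyA] at h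
    linarith
  -- integrability of the area pieces
  have int2 : Integrable (fun x => φ x * φ x * s x) := by
    apply key_int _ ((hφC.continuous.mul hφC.continuous).mul hsC.continuous)
    intro x hx
    simp [hφ0 x (by linarith)]
  have int3 : Integrable (fun x => φ x * φ x / s x) := by
    apply key_int _ ((hφC.continuous.mul hφC.continuous).div hsC.continuous
      fun x => (hs0 x).ne')
    intro x hx
    simp [hφ0 x (by linarith)]
  have int4 : Integrable (fun x => φ x * φ x * (gradSq n w x / s x)) := by
    apply key_int _ ((hφC.continuous.mul hφC.continuous).mul
      (hqC.continuous.div hsC.continuous fun x => (hs0 x).ne'))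
    intro x hx
    simp [hφ0 x (by linarith)]
  -- step 1 : restrict to the ball
  have step1 : ∫ x in Metric.ball (0 : EuclideanSpace ℝ (Fin n)) r, s x
      ≤ ∫ x, φ x * φ x * s x := by
    rw [← integral_indicator measurableSet_ball]
    apply integral_mono _ int2 _
    · rw [integrable_indicator_iff measurableSet_ball]
      exact ((hsC.continuous.continuousOn).integrableOn_compact
        (isCompact_closedBall (0 : EuclideanSpace ℝ (Fin n)) r)).mono_set
        ball_subset_closedBall
    · intro x
      by_cases hx : x ∈ Metric.ball (0 : EuclideanSpace ℝ (Fin n)) r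
      · rw [indicator_of_mem hx]
        rw [mem_ball, dist_eq_norm, sub_zero] at hx
        show s x ≤ φ x * φ x * s x
        rw [hφ1 x hx.le, one_mul, one_mul]
      · rw [indicator_of_notMem hx]
        show (0:ℝ) ≤ φ x * φ x * s x
        have := hs0 x
        have := hφnn x
        positivity
  -- step 2 : split the area integrand
  have step2 : ∫ x, φ x * φ x * s x
      = (∫ x, φ x * φ x / s x) + ∫ x, φ x * φ x * (gradSq n w x / s x) := by
    rw [← integral_add int3 int4]
    congr 1
    funext x
    have hsx := (hs0 x).ne'
    field_simp
    linear_combination (φ x * φ x) * hss x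
  -- notation for the volume of the big ball
  set V : ℝ := (volume (closedBall (0 : EuclideanSpace ℝ (Fin n)) (2 * r))).toReal with hVdef
  have hV0 : 0 ≤ V := ENNReal.toReal_nonneg
  have hVval : V = 2 ^ n * r ^ n * V₁ := by
    rw [hVdef, Measure.addHaar_closedBall' _ _ (by positivity : (0:ℝ) ≤ 2 * r),
      finrank_euclideanSpace_fin, ENNReal.toReal_mul,
      ENNReal.toReal_ofReal (by positivity : (0:ℝ) ≤ (2*r) ^ n), mul_pow, hV₁def]
  -- step 3 : bound the first term
  have hindint : Integrable ((closedBall (0 : EuclideanSpace ℝ (Fin n)) (2*r)).indicator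
      (fun _ => (1:ℝ))) := by
    rw [integrable_indicator_iff measurableSet_closedBall]
    exact integrableOn_const measure_closedBall_lt_top.ne
  have term1 : ∫ x, φ x * φ x / s x ≤ V := by
    have hmono : ∫ x, φ x * φ x / s x
        ≤ ∫ x, (closedBall (0 : EuclideanSpace ℝ (Fin n)) (2*r)).indicator
            (fun _ => (1:ℝ)) x := by
      apply integral_mono int3 hindint
      intro x
      by_cases hx : x ∈ closedBall (0 : EuclideanSpace ℝ (Fin n)) (2*r)
      · rw [indicator_of_mem hx, div_le_one (hs0 x)]
        calc φ x * φ x ≤ 1 * 1 :=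
            mul_le_mul (hφle1 x) (hφle1 x) (hφnn x) zero_le_one
          _ ≤ s x := by rw [one_mul]; exact hs1 x
      · rw [indicator_of_notMem hx]
        rw [mem_closedBall, dist_eq_norm, sub_zero, not_le] at hx
        simp [hφ0 x hx.le]
    calc ∫ x, φ x * φ x / s x ≤ _ := hmono
      _ = V := by rw [integral_indicator_const _ measurableSet_closedBall]; simp [hVdef, measureReal_def]
  -- step 4 : bound each boundary term
  have term2 : ∀ i, |∫ x, (w x * fderiv ℝ (fun y => φ y * φ y) x (e i)) * X i x|
      ≤ M * (2 * (K₀ * r⁻¹)) * V := by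
    intro i
    have hindint2 : Integrable ((closedBall (0 : EuclideanSpace ℝ (Fin n)) (2*r)).indicator
        (fun _ => M * (2 * (K₀ * r⁻¹)))) := by
      rw [integrable_indicator_iff measurableSet_closedBall]
      exact integrableOn_const measure_closedBall_lt_top.ne
    calc |∫ x, (w x * fderiv ℝ (fun y => φ y * φ y) x (e i)) * X i x|
        ≤ ∫ x, |(w x * fderiv ℝ (fun y => φ y * φ y) x (e i)) * X i x| :=
          by
            rw [← Real.norm_eq_abs]
            calc ‖∫ x, (w x * fderiv ℝ (fun y => φ y * φ y) x (e i)) * X i x‖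
                ≤ ∫ x, ‖(w x * fderiv ℝ (fun y => φ y * φ y) x (e i)) * X i x‖ :=
                  norm_integral_le_integral_norm _
              _ = ∫ x, |(w x * fderiv ℝ (fun y => φ y * φ y) x (e i)) * X i x| := by
                  simp only [Real.norm_eq_abs]
      _ ≤ ∫ x, (closedBall (0 : EuclideanSpace ℝ (Fin n)) (2*r)).indicator
            (fun _ => M * (2 * (K₀ * r⁻¹))) x := by
          apply integral_mono (intB i).abs hindint2
          intro x
          show |(w x * fderiv ℝ (fun y => φ y * φ y) x (e i)) * X i x|
            ≤ (closedBall (0 : EuclideanSpace ℝ (Fin n)) (2*r)).indicator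
              (fun _ => M * (2 * (K₀ * r⁻¹))) x
          by_cases hx : x ∈ closedBall (0 : EuclideanSpace ℝ (Fin n)) (2*r)
          · rw [indicator_of_mem hx, abs_mul, abs_mul]
            have h1 : |w x| ≤ M := hM x
            have h2 := hφφ' i x
            have h3 := hXle1 i x
            calc |w x| * |fderiv ℝ (fun y => φ y * φ y) x (e i)| * |X i x|
                ≤ M * (2 * (K₀ * r⁻¹)) * 1 := by
                  apply mul_le_mul _ h3 (abs_nonneg _) (by positivity)
                  exact mul_le_mul h1 h2 (abs_nonneg _) hM0
              _ = M * (2 * (K₀ * r⁻¹)) := mul_one _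
          · rw [indicator_of_notMem hx]
            rw [mem_closedBall, dist_eq_norm, sub_zero, not_le] at hx
            rw [hφφ'0 x hx]
            simp
      _ = M * (2 * (K₀ * r⁻¹)) * V := by
          rw [integral_indicator_const _ measurableSet_closedBall]
          rw [hVdef, smul_eq_mul, mul_comm, measureReal_def]
  -- assemble everything
  have chain : ∫ x in Metric.ball (0 : EuclideanSpace ℝ (Fin n)) r, s x
      ≤ V + (n : ℝ) * (M * (2 * (K₀ * r⁻¹)) * V) := by
    calc ∫ x in Metric.ball (0 : EuclideanSpace ℝ (Fin n)) r, s x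
        ≤ ∫ x, φ x * φ x * s x := step1
      _ = (∫ x, φ x * φ x / s x) + ∫ x, φ x * φ x * (gradSq n w x / s x) := step2
      _ ≤ V + (n : ℝ) * (M * (2 * (K₀ * r⁻¹)) * V) := by
          apply add_le_add term1
          rw [keyB]
          calc - ∑ i, ∫ x, (w x * fderiv ℝ (fun y => φ y * φ y) x (e i)) * X i x
              ≤ |∑ i, ∫ x, (w x * fderiv ℝ (fun y => φ y * φ y) x (e i)) * X i x| :=
                neg_le_abs _
            _ ≤ ∑ i, |∫ x, (w x * fderiv ℝ (fun y => φ y * φ y) x (e i)) * X i x| :=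
                Finset.abs_sum_le_sum_abs _ _
            _ ≤ ∑ _i : Fin n, M * (2 * (K₀ * r⁻¹)) * V :=
                Finset.sum_le_sum fun i _ => term2 i
            _ = (n : ℝ) * (M * (2 * (K₀ * r⁻¹)) * V) := by
                rw [Finset.sum_const, Finset.card_univ, Fintype.card_fin, nsmul_eq_mul]
  have h2n : (0:ℝ) ≤ 2 * n * K₀ := by positivity
  have hu : (0:ℝ) ≤ r⁻¹ * M := by positivity
  have hfin : (1:ℝ) + (2 * (n:ℝ) * K₀) * (r⁻¹ * M) ≤ (1 + 2 * n * K₀) * (1 + r⁻¹ * M) := by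
    nlinarith [hu, h2n]
  have final : ∫ x in Metric.ball (0 : EuclideanSpace ℝ (Fin n)) r, s x
      ≤ 2 ^ n * V₁ * (1 + 2 * n * K₀) * r ^ n * (1 + r⁻¹ * M) := by
    calc ∫ x in Metric.ball (0 : EuclideanSpace ℝ (Fin n)) r, s x
        ≤ V + (n : ℝ) * (M * (2 * (K₀ * r⁻¹)) * V) := chain
      _ = V * (1 + (2 * (n:ℝ) * K₀) * (r⁻¹ * M)) := by ring
      _ ≤ V * ((1 + 2 * n * K₀) * (1 + r⁻¹ * M)) := mul_le_mul_of_nonneg_left hfin hV0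
      _ = 2 ^ n * V₁ * (1 + 2 * n * K₀) * r ^ n * (1 + r⁻¹ * M) := by rw [hVval]; ring
  exact final
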